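/- If two subgroups H₁, H₂ of a finite group G have equivalent permutation representations ℂ[H₁\G] ≅ ℂ[H₂\G], then the numbers of orbits of H₁ and H₂ on any finite G-set X are equal. -/
import Mathlib

open MulAction

noncomputable def shiftLM (G : Type) [Group G] (Y : Type) [MulAction G Y] (g : G) :
    (Y → ℂ) →ₗ[ℂ] (Y → ℂ) where
  toFun f := fun x => f (g⁻¹ • x)
  map_add' _ _ := rfl
  map_smul' _ _ := rfl

lemma trace_shiftLM (G : Type) [Group G] (Y : Type) [Fintype Y] [MulAction G Y] (g : G) :
    LinearMap.trace ℂ (Y → ℂ) (shiftLM G Y g) = (Nat.card (fixedBy Y g) : ℂ) := by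
  classical
  rw [LinearMap.trace_eq_matrix_trace ℂ (Pi.basisFun ℂ Y), Matrix.trace]
  simp only [Matrix.diag, LinearMap.toMatrix_apply, Pi.basisFun_apply, Pi.basisFun_repr,
    shiftLM, LinearMap.coe_mk, AddHom.coe_mk, Pi.single_apply]
  have h1 : ∀ x : Y, (g⁻¹ • x = x) ↔ (g • x = x) := by
    intro x; rw [inv_smul_eq_iff, eq_comm]
  have : Nat.card (fixedBy Y g) = (Finset.univ.filter (fun x : Y => g⁻¹ • x = x)).card := by
    rw [Nat.card_eq_fintype_card]
    rw [Fintype.card_subtype]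
    congr 1; ext x; simp [mem_fixedBy, h1]
  rw [this, Finset.card_filter]
  push_cast
  apply Finset.sum_congr rfl
  intro x _
  by_cases h : g⁻¹ • x = x <;> simp [h]

lemma fixedcard_conj (G : Type) [Group G] (X : Type) [MulAction G X] (a g : G) :
    Nat.card (fixedBy X (a * g * a⁻¹)) = Nat.card (fixedBy X g) := by
  rw [← smul_fixedBy X g a]
  exact Nat.card_image_of_injective (MulAction.injective a) _

lemma key_count (G : Type) [Group G] [Fintype G] (H : Subgroup G)
    (X : Type) [Fintype X] [MulAction G X] :
    ∑ g : G, Nat.card (fixedBy (G ⧸ H) g) * Nat.card (fixedBy X g)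
      = Nat.card (orbitRel.Quotient H X) * Nat.card G := by
  classical
  set fX : G → ℕ := fun g => Nat.card (fixedBy X g) with hfX
  have hc : ∀ g : G, Nat.card (fixedBy (G ⧸ H) g) = ∑ y : G ⧸ H, if g • y = y then 1 else 0 := by
    intro g
    rw [Nat.card_eq_fintype_card, Fintype.card_subtype, Finset.card_filter]
    apply Finset.sum_congr rfl
    intro y _; simp [mem_fixedBy]
  calc ∑ g : G, Nat.card (fixedBy (G ⧸ H) g) * fX g
      = ∑ g : G, ∑ y : G ⧸ H, (if g • y = y then fX g else 0) := by
        apply Finset.sum_congr rfl; intro g _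
        rw [hc, Finset.sum_mul]
        apply Finset.sum_congr rfl; intro y _
        by_cases h : g • y = y <;> simp [h]
    _ = ∑ y : G ⧸ H, ∑ g : G, (if g • y = y then fX g else 0) := Finset.sum_comm
    _ = ∑ _y : G ⧸ H, ∑ h : H, fX (h : G) := by
        apply Finset.sum_congr rfl
        intro y _
        induction y using QuotientGroup.induction_on with
        | H a =>
        rw [← Fintype.sum_equiv ((MulAut.conj a).toEquiv) _
          (fun g => if g • ((a : G ⧸ H)) = (a : G ⧸ H) then fX g else 0) (fun g => rfl)]
        have hcond : ∀ g : G, (MulAut.conj a g) • ((a : G ⧸ H)) = (a : G ⧸ H) ↔ g ∈ H := by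
          intro g
          rw [MulAut.conj_apply]
          rw [show ((a * g * a⁻¹) • ((a : G ⧸ H)) : G ⧸ H) = ((a * g * a⁻¹ * a : G) : G ⧸ H) from rfl]
          rw [QuotientGroup.eq]
          constructor
          · intro h; simpa [mul_assoc] using h
          · intro h; simpa [mul_assoc] using h
        have hval : ∀ g : G, fX (MulAut.conj a g) = fX g := by
          intro g; rw [MulAut.conj_apply]; exact fixedcard_conj G X a g
        calc ∑ g : G, (if (MulAut.conj a g) • ((a : G ⧸ H)) = (a : G ⧸ H) then fX (MulAut.conj a g) else 0)
            = ∑ g : G, (if g ∈ H then fX g else 0) := by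
              apply Finset.sum_congr rfl; intro g _
              rw [hval]
              by_cases h : g ∈ H
              · rw [if_pos ((hcond g).mpr h), if_pos h]
              · rw [if_neg (fun hh => h ((hcond g).mp hh)), if_neg h]
          _ = ∑ h : H, fX (h : G) := by
              rw [← Finset.sum_filter]
              exact Finset.sum_subtype _ (fun x => by simp) fX
    _ = Fintype.card (G ⧸ H) * ∑ h : H, fX (h : G) := by
        rw [Finset.sum_const, Finset.card_univ, smul_eq_mul]
    _ = Nat.card (orbitRel.Quotient H X) * Nat.card G := by
        have hb : ∑ h : H, Fintype.card (fixedBy X h)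
            = Fintype.card (Quotient (orbitRel H X)) * Fintype.card H :=
          sum_card_fixedBy_eq_card_orbits_mul_card_group H X
        have hfix : ∀ h : H, Fintype.card (fixedBy X h) = fX (h : G) := by
          intro h
          simp only [hfX]
          rw [Nat.card_eq_fintype_card]
          apply Fintype.card_congr
          apply Equiv.setCongr
          ext x; simp [mem_fixedBy, Subgroup.smul_def]
        rw [Finset.sum_congr rfl (fun h _ => hfix h)] at hb
        rw [hb]
        have h2 : Fintype.card (Quotient (orbitRel H X)) = Nat.card (orbitRel.Quotient H X) :=
          (Nat.card_eq_fintype_card).symm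
        have := Subgroup.card_eq_card_quotient_mul_card_subgroup H
        simp only [Nat.card_eq_fintype_card] at this
        rw [h2]
        simp only [Nat.card_eq_fintype_card]
        rw [this]
        ring

/-- If two subgroups `H₁, H₂` of a finite group `G` have equivalent
permutation representations `ℂ[H₁\G] ≅ ℂ[H₂\G]`, then the numbers of orbits of `H₁` and
`H₂` on any finite `G`-set `X` are equal. -/
theorem perm_rep_equiv_orbit_counts (G : Type) [Group G] [Fintype G]
    (H₁ H₂ : Subgroup G)
    (hrepequiv : ∃ e : (G ⧸ H₁ → ℂ) ≃ₗ[ℂ] (G ⧸ H₂ → ℂ),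
      ∀ (g : G) (f : G ⧸ H₁ → ℂ),
        e (fun x => f (g⁻¹ • x)) = fun x => e f (g⁻¹ • x)) :
    ∀ (X : Type) [Fintype X] [MulAction G X],
      Nat.card (MulAction.orbitRel.Quotient H₁ X)
        = Nat.card (MulAction.orbitRel.Quotient H₂ X) := by
  intro X _ _
  classical
  obtain ⟨e, he⟩ := hrepequiv
  have hT : ∀ g : G, e.conj (shiftLM G (G ⧸ H₁) g) = shiftLM G (G ⧸ H₂) g := by
    intro g
    apply LinearMap.ext
    intro f
    show e ((shiftLM G (G ⧸ H₁) g) (e.symm f)) = _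
    have : (shiftLM G (G ⧸ H₁) g) (e.symm f) = fun x => (e.symm f) (g⁻¹ • x) := rfl
    rw [this, he g (e.symm f)]
    simp only [LinearEquiv.apply_symm_apply]
    rfl
  have hg : ∀ g : G, Nat.card (fixedBy (G ⧸ H₁) g) = Nat.card (fixedBy (G ⧸ H₂) g) := by
    intro g
    have : (Nat.card (fixedBy (G ⧸ H₁) g) : ℂ) = (Nat.card (fixedBy (G ⧸ H₂) g) : ℂ) := by
      rw [← trace_shiftLM, ← trace_shiftLM, ← hT g, LinearMap.trace_conj']
    exact_mod_cast this
  have h1 := key_count G H₁ X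
  have h2 := key_count G H₂ X
  have hsum : ∑ g : G, Nat.card (fixedBy (G ⧸ H₁) g) * Nat.card (fixedBy X g)
      = ∑ g : G, Nat.card (fixedBy (G ⧸ H₂) g) * Nat.card (fixedBy X g) :=
    Finset.sum_congr rfl (fun g _ => by rw [hg g])
  have : Nat.card (orbitRel.Quotient H₁ X) * Nat.card G
      = Nat.card (orbitRel.Quotient H₂ X) * Nat.card G := by
    rw [← h1, ← h2, hsum]
  exact Nat.eq_of_mul_eq_mul_right Nat.card_pos this
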